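/- Let G = (V1, V2, V3; E) be a balanced tripartite graph with |V1| = |V2| = |V3| = M, such that every vertex is adjacent to at least (3/4)M vertices in each of the other two classes. Then G contains M pairwise vertex-disjoint triangles (i.e., a perfect triangle tiling). -/

import Mathlib

open Finset

lemma card_filter_attach' {V : Type*} [DecidableEq V] (A : Finset V) (p : V → Prop)
    [DecidablePred p] :
    (Finset.univ.filter (fun u : ↥A => p ↑u)).card = (A.filter p).card := by
  refine Finset.card_nbij (fun u => (u : V)) ?_ ?_ ?_
  · intro u hu
    simp only [Finset.mem_coe, mem_filter, mem_univ, true_and] at hu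
    exact mem_filter.2 ⟨u.2, hu⟩
  · intro a ha b hb h
    exact Subtype.ext h
  · intro b hb
    simp only [Finset.coe_filter, Set.mem_setOf_eq] at hb
    exact ⟨⟨b, hb.1⟩, by simp [hb.2], rfl⟩

lemma hall_half {ι V : Type*} [Fintype ι] [DecidableEq ι] [DecidableEq V]
    (M : ℕ) (B : Finset V) (t : ι → Finset V)
    (hι : Fintype.card ι = M) (hB : B.card = M)
    (hsub : ∀ u, t u ⊆ B)
    (h1 : ∀ u, 2 * (t u).card ≥ M)
    (h2 : ∀ b ∈ B, 2 * (Finset.univ.filter (fun u => b ∈ t u)).card ≥ M) :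
    ∃ f : ι → V, Function.Injective f ∧ ∀ u, f u ∈ t u := by
  rw [← Finset.all_card_le_biUnion_card_iff_exists_injective]
  intro S
  rcases S.eq_empty_or_nonempty with rfl | ⟨u, hu⟩
  · simp
  by_cases hS : 2 * S.card ≤ M
  · have h := h1 u
    have hsub' : t u ⊆ S.biUnion t := Finset.subset_biUnion_of_mem t hu
    have := Finset.card_le_card hsub'
    omega
  · have hBsub : B ⊆ S.biUnion t := by
      intro b hb
      have h2' := h2 b hb
      set U := Finset.univ.filter (fun u => b ∈ t u) with hU
      have hUS : ¬ Disjoint U S := by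
        intro hd
        have hcu := Finset.card_union_of_disjoint hd
        have hle : (U ∪ S).card ≤ Fintype.card ι := Finset.card_le_univ _
        omega
      rw [Finset.not_disjoint_iff] at hUS
      obtain ⟨u', hu'U, hu'S⟩ := hUS
      have hb' : b ∈ t u' := by
        rw [hU, mem_filter] at hu'U; exact hu'U.2
      exact Finset.mem_biUnion.2 ⟨u', hu'S, hb'⟩
    have h3 := Finset.card_le_card hBsub
    have hSle : S.card ≤ Fintype.card ι := Finset.card_le_univ S
    omega

theorem stmt_0 {V : Type*} [Fintype V] [DecidableEq V]
    (G : SimpleGraph V) [DecidableRel G.Adj] (M : ℕ)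
    (P : Fin 3 → Finset V)
    (hdisj : ∀ i j, i ≠ j → Disjoint (P i) (P j))
    (hcover : ∀ v : V, ∃ i, v ∈ P i)
    (hcard : ∀ i, (P i).card = M)
    (htripartite : ∀ i, ∀ u ∈ P i, ∀ v ∈ P i, ¬ G.Adj u v)
    (hdeg : ∀ i j, i ≠ j → ∀ v ∈ P i,
      4 * ((P j).filter (G.Adj v)).card ≥ 3 * M) :
    ∃ T : Finset (Finset V), T.card = M ∧ (∀ s ∈ T, G.IsNClique 3 s) ∧
      (T : Set (Finset V)).PairwiseDisjoint id ∧ ∀ v : V, ∃ s ∈ T, v ∈ s := by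
  have hcard0 : Fintype.card ↥(P 0) = M := by rw [Fintype.card_coe, hcard]
  -- Step 1: matching between P 0 and P 1
  obtain ⟨f, hfinj, hf⟩ :
      ∃ f : ↥(P 0) → V, Function.Injective f ∧
        ∀ u : ↥(P 0), f u ∈ (P 1).filter (G.Adj ↑u) := by
    apply hall_half M (P 1) _ hcard0 (hcard 1)
    · intro u; exact Finset.filter_subset _ _
    · intro u
      have := hdeg 0 1 (by decide) ↑u u.2
      omega
    · intro b hb
      have hd := hdeg 1 0 (by decide) b hb
      have : (Finset.univ.filter (fun u : ↥(P 0) => b ∈ (P 1).filter (G.Adj ↑u))).card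
          = ((P 0).filter (fun u => b ∈ (P 1).filter (G.Adj u))).card :=
        card_filter_attach' (P 0) (fun u => b ∈ (P 1).filter (G.Adj u))
      rw [this]
      have heq : (P 0).filter (fun u => b ∈ (P 1).filter (G.Adj u))
          = (P 0).filter (G.Adj b) := by
        apply Finset.filter_congr
        intro u hu
        simp only [mem_filter]
        constructor
        · rintro ⟨-, h⟩; exact h.symm
        · intro h; exact ⟨hb, h.symm⟩
      rw [heq]; omega
  have hf1 : ∀ u : ↥(P 0), f u ∈ P 1 := fun u => (mem_filter.1 (hf u)).1
  have hfadj : ∀ u : ↥(P 0), G.Adj ↑u (f u) := fun u => (mem_filter.1 (hf u)).2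
  -- f is surjective onto P 1
  have hfsurj : ∀ v ∈ P 1, ∃ u : ↥(P 0), f u = v := by
    have himg : Finset.univ.image f = P 1 := by
      apply Finset.eq_of_subset_of_card_le
      · intro v hv
        obtain ⟨u, -, rfl⟩ := Finset.mem_image.1 hv
        exact hf1 u
      · rw [Finset.card_image_of_injective _ hfinj, Finset.card_univ, hcard0, hcard]
    intro v hv
    rw [← himg] at hv
    obtain ⟨u, -, rfl⟩ := Finset.mem_image.1 hv
    exact ⟨u, rfl⟩
  -- Step 2: matching pairs to P 2
  obtain ⟨g, hginj, hg⟩ :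
      ∃ g : ↥(P 0) → V, Function.Injective g ∧
        ∀ u : ↥(P 0), g u ∈ (P 2).filter (fun w => G.Adj ↑u w ∧ G.Adj (f u) w) := by
    apply hall_half M (P 2) _ hcard0 (hcard 2)
    · intro u; exact Finset.filter_subset _ _
    · intro u
      have hsplit : (P 2).filter (fun w => G.Adj ↑u w ∧ G.Adj (f u) w)
          = ((P 2).filter (G.Adj ↑u)) ∩ ((P 2).filter (G.Adj (f u))) := by
        ext w; simp only [mem_filter, mem_inter]; tauto
      have hiu : 4 * ((P 2).filter (G.Adj ↑u)).card ≥ 3 * M :=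
        hdeg 0 2 (by decide) ↑u u.2
      have hif : 4 * ((P 2).filter (G.Adj (f u))).card ≥ 3 * M :=
        hdeg 1 2 (by decide) (f u) (hf1 u)
      have hiucap := Finset.card_inter_add_card_union
        ((P 2).filter (G.Adj ↑u)) ((P 2).filter (G.Adj (f u)))
      have hunle : (((P 2).filter (G.Adj ↑u)) ∪ ((P 2).filter (G.Adj (f u)))).card ≤ M := by
        rw [← hcard 2]
        apply Finset.card_le_card
        apply Finset.union_subset <;> exact Finset.filter_subset _ _
      rw [hsplit]
      omega
    · intro b hb
      -- S1 : u adjacent to b, S2 : f u adjacent to b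
      set S1 := Finset.univ.filter (fun u : ↥(P 0) => G.Adj ↑u b) with hS1
      set S2 := Finset.univ.filter (fun u : ↥(P 0) => G.Adj (f u) b) with hS2
      have hS1c : 4 * S1.card ≥ 3 * M := by
        have hd := hdeg 2 0 (by decide) b hb
        have : S1.card = ((P 0).filter (fun u => G.Adj u b)).card :=
          card_filter_attach' (P 0) (fun u => G.Adj u b)
        have heq : (P 0).filter (fun u => G.Adj u b) = (P 0).filter (G.Adj b) := by
          apply Finset.filter_congr; intro u hu
          exact ⟨fun h => h.symm, fun h => h.symm⟩
        rw [this, heq]; exact hd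
      have hS2c : 4 * S2.card ≥ 3 * M := by
        have hd := hdeg 2 1 (by decide) b hb
        have hsub2 : (P 1).filter (G.Adj b) ⊆ Finset.univ.image (fun u : S2 => f ↑u) := by
          intro v hv
          rw [mem_filter] at hv
          obtain ⟨u, rfl⟩ := hfsurj v hv.1
          have hu2 : u ∈ S2 := by
            rw [hS2, mem_filter]
            exact ⟨Finset.mem_univ _, hv.2.symm⟩
          exact Finset.mem_image.2 ⟨⟨u, hu2⟩, Finset.mem_univ _, rfl⟩
        have hle := Finset.card_le_card hsub2
        have himle : (Finset.univ.image (fun u : S2 => f ↑u)).card ≤ S2.card := by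
          calc (Finset.univ.image (fun u : S2 => f ↑u)).card
              ≤ (Finset.univ : Finset S2).card := Finset.card_image_le
            _ = S2.card := by rw [Finset.card_univ, Fintype.card_coe]
        omega
      have hcap : Finset.univ.filter
          (fun u : ↥(P 0) => b ∈ (P 2).filter (fun w => G.Adj ↑u w ∧ G.Adj (f u) w))
          = S1 ∩ S2 := by
        ext u
        simp only [hS1, hS2, mem_filter, mem_inter, Finset.mem_univ, true_and]
        constructor
        · rintro ⟨-, h1, h2⟩; exact ⟨h1, h2⟩
        · rintro ⟨h1, h2⟩; exact ⟨hb, h1, h2⟩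
      have hiucap := Finset.card_inter_add_card_union S1 S2
      have hunle : (S1 ∪ S2).card ≤ M := by
        rw [← hcard0, ← Finset.card_univ]
        exact Finset.card_le_univ _
      rw [hcap]
      omega
  have hg2 : ∀ u : ↥(P 0), g u ∈ P 2 := fun u => (mem_filter.1 (hg u)).1
  have hgadj : ∀ u : ↥(P 0), G.Adj ↑u (g u) := fun u => ((mem_filter.1 (hg u)).2).1
  have hgadj' : ∀ u : ↥(P 0), G.Adj (f u) (g u) := fun u => ((mem_filter.1 (hg u)).2).2
  have hgsurj : ∀ v ∈ P 2, ∃ u : ↥(P 0), g u = v := by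
    have himg : Finset.univ.image g = P 2 := by
      apply Finset.eq_of_subset_of_card_le
      · intro v hv
        obtain ⟨u, -, rfl⟩ := Finset.mem_image.1 hv
        exact hg2 u
      · rw [Finset.card_image_of_injective _ hginj, Finset.card_univ, hcard0, hcard]
    intro v hv
    rw [← himg] at hv
    obtain ⟨u, -, rfl⟩ := Finset.mem_image.1 hv
    exact ⟨u, rfl⟩
  -- distinctness facts
  have hd01 := hdisj 0 1 (by decide)
  have hd02 := hdisj 0 2 (by decide)
  have hd12 := hdisj 1 2 (by decide)
  have hne1 : ∀ (u u' : ↥(P 0)), (↑u : V) ≠ f u' := fun u u' h => by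
    exact Finset.disjoint_left.1 hd01 u.2 (h ▸ hf1 u')
  have hne2 : ∀ (u u' : ↥(P 0)), (↑u : V) ≠ g u' := fun u u' h => by
    exact Finset.disjoint_left.1 hd02 u.2 (h ▸ hg2 u')
  have hne3 : ∀ (u u' : ↥(P 0)), f u ≠ g u' := fun u u' h => by
    exact Finset.disjoint_left.1 hd12 (hf1 u) (h ▸ hg2 u')
  -- the tiling
  set tri : ↥(P 0) → Finset V := fun u => {↑u, f u, g u} with htri
  have hmemtri : ∀ (u u' : ↥(P 0)), (↑u : V) ∈ tri u' → u = u' := by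
    intro u u' h
    simp only [htri, mem_insert, mem_singleton] at h
    rcases h with h | h | h
    · exact Subtype.ext h
    · exact absurd h (hne1 u u')
    · exact absurd h (hne2 u u')
  have htriinj : Function.Injective tri := by
    intro u u' h
    apply hmemtri
    rw [← h]
    simp [htri]
  refine ⟨Finset.univ.image tri, ?_, ?_, ?_, ?_⟩
  · rw [Finset.card_image_of_injective _ htriinj, Finset.card_univ, hcard0]
  · intro s hs
    obtain ⟨u, -, rfl⟩ := Finset.mem_image.1 hs
    rw [htri]
    exact SimpleGraph.is3Clique_triple_iff.2 ⟨hfadj u, hgadj u, hgadj' u⟩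
  · intro s hs t ht hst
    simp only [Finset.coe_image, Set.mem_image] at hs ht
    obtain ⟨u, -, rfl⟩ := hs
    obtain ⟨u', -, rfl⟩ := ht
    have huu' : u ≠ u' := fun h => hst (by rw [h])
    simp only [Function.onFun, id]
    rw [Finset.disjoint_left]
    intro a ha ha'
    simp only [htri, mem_insert, mem_singleton] at ha ha'
    rcases ha with rfl | rfl | rfl <;> rcases ha' with h | h | h
    · exact huu' (Subtype.ext h)
    · exact hne1 u u' h
    · exact hne2 u u' h
    · exact hne1 u' u h.symm
    · exact huu' (hfinj h)
    · exact hne3 u u' h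
    · exact hne2 u' u h.symm
    · exact hne3 u' u h.symm
    · exact huu' (hginj h)
  · intro v
    obtain ⟨i, hi⟩ := hcover v
    fin_cases i
    · exact ⟨tri ⟨v, hi⟩, Finset.mem_image_of_mem _ (Finset.mem_univ _),
        by simp [htri]⟩
    · obtain ⟨u, rfl⟩ := hfsurj v hi
      exact ⟨tri u, Finset.mem_image_of_mem _ (Finset.mem_univ _), by simp [htri]⟩
    · obtain ⟨u, rfl⟩ := hgsurj v hi
      exact ⟨tri u, Finset.mem_image_of_mem _ (Finset.mem_univ _), by simp [htri]⟩
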